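/- Let p be a prime, let u ≥ 0 and α ≥ u + 2 and m ≥ 1 be integers with p ∤ m, and set N = p^α · m. Suppose the set {1, 2, …, k} splits ℤ_N with splitter set S. For an integer i ≥ 0, let S_i = {s ∈ S : p^i divides the additive order of s but p^{i+1} does not}. If |S_{α−1}| = |S_{α−2}| = ⋯ = |S_{α−u}| = 0, then (k − ⌊k/p⌋) · |S_{α−u−1}| + (⌊k/p^{u+1}⌋ − ⌊k/p^{u+2}⌋) · |S_α| = p^{α−u−2} · (p − 1) · m. -/

import Mathlib

open Finset

/-- `S ⊆ G` is a splitter set for the multiplier set `{1, 2, …, k}` in the finite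
abelian group `G`: every nonzero `g ∈ G` has a unique representation `g = m • s`
with `m ∈ {1, …, k}` and `s ∈ S`. -/
def IsSplitting {G : Type*} [AddCommGroup G] (k : ℕ) (S : Set G) : Prop :=
  ∀ g : G, g ≠ 0 → ∃! ms : ℤ × G,
    ms.1 ∈ Set.Icc (1 : ℤ) (k : ℤ) ∧ ms.2 ∈ S ∧ ms.1 • ms.2 = g

/-- `S` is a splitter set for `{1, …, k}` in `G`, and the splitting is purely
singular: every prime divisor of `|G|` divides some multiplier `m ∈ {1, …, k}`. -/
def IsPurelySingularSplitting {G : Type*} [AddCommGroup G] (k : ℕ) (S : Set G) : Prop :=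
  IsSplitting k S ∧
    ∀ q : ℕ, q.Prime → q ∣ Nat.card G →
      ∃ m : ℤ, m ∈ Set.Icc (1 : ℤ) (k : ℤ) ∧ (q : ℤ) ∣ m


lemma exact_pow_iff_factorization {p n i : ℕ} (hp : p.Prime) (hn : n ≠ 0) :
    (p ^ i ∣ n ∧ ¬ p ^ (i + 1) ∣ n) ↔ n.factorization p = i := by
  rw [hp.pow_dvd_iff_le_factorization hn, hp.pow_dvd_iff_le_factorization hn]
  omega

lemma card_Ioc_dvd_not_dvd {n d₁ d₂ : ℕ} (hdd : d₁ ∣ d₂) :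
    ((Finset.Ioc 0 n).filter fun c => d₁ ∣ c ∧ ¬ d₂ ∣ c).card = n / d₁ - n / d₂ := by
  have h1 : ((Finset.Ioc 0 n).filter (d₁ ∣ ·)).card = n / d₁ :=
    Nat.Ioc_filter_dvd_card_eq_div n d₁
  have h2 : ((Finset.Ioc 0 n).filter (d₂ ∣ ·)).card = n / d₂ :=
    Nat.Ioc_filter_dvd_card_eq_div n d₂
  have key := Finset.card_filter_add_card_filter_not
    (s := (Finset.Ioc 0 n).filter (d₁ ∣ ·)) (p := (d₂ ∣ ·))
  rw [Finset.filter_filter, Finset.filter_filter] at key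
  have e1 : ((Finset.Ioc 0 n).filter fun c => d₁ ∣ c ∧ d₂ ∣ c)
      = (Finset.Ioc 0 n).filter (d₂ ∣ ·) := by
    apply Finset.filter_congr
    intro c _
    exact ⟨And.right, fun hc => ⟨hdd.trans hc, hc⟩⟩
  have e2 : ((Finset.Ioc 0 n).filter fun c => d₁ ∣ c ∧ ¬ d₂ ∣ c)
      = (Finset.Ioc 0 n).filter fun a => d₁ ∣ a ∧ ¬(fun x => d₂ ∣ x) a := rfl
  rw [e1, h2, h1, ← e2] at key
  omega

lemma card_Icc_int_toNat (k : ℕ) (Q : ℕ → Prop) [DecidablePred Q] :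
    ((Finset.Icc (1:ℤ) (k:ℤ)).filter fun c => Q c.toNat).card
      = ((Finset.Ioc 0 k).filter Q).card := by
  refine Finset.card_nbij' (i := fun c => c.toNat) (j := fun c => (c : ℤ)) ?_ ?_ ?_ ?_
  · intro a ha
    simp only [Finset.mem_coe, Finset.mem_filter, Finset.mem_Icc] at ha
    simp only [Finset.mem_coe, Finset.mem_filter, Finset.mem_Ioc]
    exact ⟨⟨by omega, by omega⟩, ha.2⟩
  · intro a ha
    simp only [Finset.mem_coe, Finset.mem_filter, Finset.mem_Ioc] at ha
    simp only [Finset.mem_coe, Finset.mem_filter, Finset.mem_Icc]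
    exact ⟨⟨by omega, by omega⟩, by simpa using ha.2⟩
  · intro a ha
    simp only [Finset.mem_coe, Finset.mem_filter, Finset.mem_Icc] at ha
    show ((a.toNat : ℤ)) = a
    omega
  · intro a _
    simp

lemma count_zmod (p α m N i : ℕ) [NeZero N] (hp : p.Prime) (hm : 1 ≤ m) (hpm : ¬ p ∣ m)
    (hN : N = p ^ α * m) (hi1 : 1 ≤ i) (hiα : i ≤ α) :
    ((Finset.univ : Finset (ZMod N)).filter
        (fun x => p ^ i ∣ addOrderOf x ∧ ¬ p ^ (i + 1) ∣ addOrderOf x)).card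
      = p ^ (i - 1) * (p - 1) * m := by
  have hN0 : N ≠ 0 := NeZero.ne N
  have hNfac : N.factorization p = α := by
    rw [hN, Nat.factorization_mul (pow_ne_zero _ hp.pos.ne') (by omega), Finsupp.add_apply,
      hp.factorization_pow, Finsupp.single_eq_same, Nat.factorization_eq_zero_of_not_dvd hpm]
    omega
  have hOrd : ∀ x : ZMod N, addOrderOf x = N / N.gcd x.val := by
    intro x
    conv_lhs => rw [← ZMod.natCast_rightInverse (n := N) x]
    rw [ZMod.addOrderOf_coe _ hN0]
  have hiff : ∀ c : ℕ, (p ^ i ∣ N / N.gcd c ∧ ¬ p ^ (i + 1) ∣ N / N.gcd c) ↔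
      (p ^ (α - i) ∣ c ∧ ¬ p ^ (α - i + 1) ∣ c) := by
    intro c
    rcases eq_or_ne c 0 with rfl | hc
    · have h1 : ¬ p ^ i ∣ N / N.gcd 0 := by
        rw [Nat.gcd_zero_right, Nat.div_self (Nat.pos_of_ne_zero hN0), Nat.dvd_one]
        intro h
        have h2 : 1 < p ^ i := Nat.one_lt_pow (by omega) hp.one_lt
        omega
      have h2 : p ^ (α - i + 1) ∣ 0 := dvd_zero _
      tauto
    · have hgne : N.gcd c ≠ 0 := fun h => hN0 (Nat.eq_zero_of_gcd_eq_zero_left h)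
      have hgdvd : N.gcd c ∣ N := Nat.gcd_dvd_left _ _
      have hqne : N / N.gcd c ≠ 0 := by
        have := Nat.div_pos (Nat.le_of_dvd (Nat.pos_of_ne_zero hN0) hgdvd)
          (Nat.pos_of_ne_zero hgne)
        omega
      rw [exact_pow_iff_factorization hp hqne, exact_pow_iff_factorization hp hc,
        Nat.factorization_div hgdvd, Finsupp.tsub_apply, Nat.factorization_gcd hN0 hc,
        Finsupp.inf_apply, hNfac]
      omega
  have step1 : ((Finset.univ : Finset (ZMod N)).filter
        (fun x => p ^ i ∣ addOrderOf x ∧ ¬ p ^ (i + 1) ∣ addOrderOf x)).card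
      = ((Finset.range N).filter (fun c => p ^ (α - i) ∣ c ∧ ¬ p ^ (α - i + 1) ∣ c)).card := by
    refine Finset.card_nbij' (i := fun x => x.val) (j := fun c => (c : ZMod N)) ?_ ?_ ?_ ?_
    · intro x hx
      simp only [Finset.mem_coe, Finset.mem_filter, Finset.mem_univ, true_and] at hx
      rw [hOrd x, hiff x.val] at hx
      simp only [Finset.mem_coe, Finset.mem_filter, Finset.mem_range]
      exact ⟨ZMod.val_lt x, hx⟩
    · intro c hc
      simp only [Finset.mem_coe, Finset.mem_filter, Finset.mem_range] at hc
      simp only [Finset.mem_coe, Finset.mem_filter, Finset.mem_univ, true_and]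
      rw [hOrd, hiff, ZMod.val_cast_of_lt hc.1]
      exact hc.2
    · intro x _
      exact ZMod.natCast_rightInverse x
    · intro c hc
      simp only [Finset.mem_coe, Finset.mem_filter, Finset.mem_range] at hc
      exact ZMod.val_cast_of_lt hc.1
  have hQN : ¬ (p ^ (α - i) ∣ N ∧ ¬ p ^ (α - i + 1) ∣ N) := by
    rintro ⟨-, h2⟩
    exact h2 ((pow_dvd_pow p (show α - i + 1 ≤ α by omega)).trans (hN ▸ dvd_mul_right _ m))
  have step2 : ((Finset.range N).filter (fun c => p ^ (α - i) ∣ c ∧ ¬ p ^ (α - i + 1) ∣ c))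
      = ((Finset.Ioc 0 N).filter (fun c => p ^ (α - i) ∣ c ∧ ¬ p ^ (α - i + 1) ∣ c)) := by
    ext c
    simp only [Finset.mem_filter, Finset.mem_range, Finset.mem_Ioc]
    constructor
    · rintro ⟨hc, hq⟩
      refine ⟨⟨?_, hc.le⟩, hq⟩
      rcases Nat.eq_zero_or_pos c with rfl | h
      · exact absurd (dvd_zero _) hq.2
      · exact h
    · rintro ⟨⟨h1, h2⟩, hq⟩
      refine ⟨lt_of_le_of_ne h2 ?_, hq⟩
      rintro rfl
      exact hQN hq
  rw [step1, step2, card_Ioc_dvd_not_dvd (pow_dvd_pow p (Nat.le_succ _))]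
  have hd1 : N / p ^ (α - i) = p ^ i * m :=
    Nat.div_eq_of_eq_mul_left (pow_pos hp.pos _)
      (by rw [hN, show p ^ α = p ^ i * p ^ (α - i) by rw [← pow_add]; congr 1; omega]; ring)
  have hd2 : N / p ^ (α - i + 1) = p ^ (i - 1) * m :=
    Nat.div_eq_of_eq_mul_left (pow_pos hp.pos _)
      (by rw [hN, show p ^ α = p ^ (i - 1) * p ^ (α - i + 1) by rw [← pow_add]; congr 1; omega]
          ring)
  rw [hd1, hd2, show p ^ (i - 1) * (p - 1) * m = (p ^ (i - 1) * m) * (p - 1) from by ring,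
    Nat.mul_sub_one, show (p ^ (i - 1) * m) * p = p ^ i * m from by
      rw [show p ^ i = p ^ (i - 1) * p from by rw [← pow_succ]; congr 1; omega]; ring]


theorem splitting_count_order_inductive_step
    (p u α m k N : ℕ) (hp : p.Prime) (hα : u + 2 ≤ α) (hm : 1 ≤ m)
    (hpm : ¬ p ∣ m) (hN : N = p ^ α * m)
    (S : Finset (ZMod N)) (h : IsSplitting k (S : Set (ZMod N)))
    (h0 : ∀ i, 1 ≤ i → i ≤ u →
      (S.filter
        (fun s => p ^ (α - i) ∣ addOrderOf s ∧ ¬ p ^ (α - i + 1) ∣ addOrderOf s)).card = 0) :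
    (k - k / p) *
        (S.filter
          (fun s => p ^ (α - u - 1) ∣ addOrderOf s ∧ ¬ p ^ (α - u - 1 + 1) ∣ addOrderOf s)).card
      + (k / p ^ (u + 1) - k / p ^ (u + 2)) *
          (S.filter (fun s => p ^ α ∣ addOrderOf s ∧ ¬ p ^ (α + 1) ∣ addOrderOf s)).card
      = p ^ (α - u - 2) * (p - 1) * m := by
  have hN0 : N ≠ 0 := by
    rw [hN]; exact Nat.mul_ne_zero (pow_ne_zero _ hp.pos.ne') (by omega)
  haveI : NeZero N := ⟨hN0⟩
  have hp1 := hp.one_lt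
  have hNfac : N.factorization p = α := by
    rw [hN, Nat.factorization_mul (pow_ne_zero _ hp.pos.ne') (by omega), Finsupp.add_apply,
      hp.factorization_pow, Finsupp.single_eq_same, Nat.factorization_eq_zero_of_not_dvd hpm]
    omega
  have hordne : ∀ x : ZMod N, addOrderOf x ≠ 0 := fun x => (addOrderOf_pos x).ne'
  have hjle : ∀ x : ZMod N, (addOrderOf x).factorization p ≤ α := by
    intro x
    have hdvd : addOrderOf x ∣ N := by
      have := addOrderOf_dvd_card (x := x); rwa [ZMod.card] at this
    have h2 := Finsupp.le_def.1 ((Nat.factorization_le_iff_dvd (hordne x) hN0).2 hdvd) p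
    rwa [hNfac] at h2
  have hband : ∀ s ∈ S, ¬ (α - u ≤ (addOrderOf s).factorization p ∧
      (addOrderOf s).factorization p ≤ α - 1) := by
    rintro s hs ⟨hb1, hb2⟩
    set j := (addOrderOf s).factorization p with hj
    have hcard := h0 (α - j) (by omega) (by omega)
    rw [Finset.card_eq_zero] at hcard
    have hmem : s ∈ S.filter (fun s => p ^ (α - (α - j)) ∣ addOrderOf s ∧
        ¬ p ^ (α - (α - j) + 1) ∣ addOrderOf s) := by
      rw [Finset.mem_filter]
      refine ⟨hs, ?_⟩
      rw [show α - (α - j) = j by omega]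
      exact (exact_pow_iff_factorization hp (hordne s)).2 hj.symm
    rw [hcard] at hmem
    exact absurd hmem (Finset.notMem_empty s)
  have hT := count_zmod p α m N (α - u - 1) hp hm hpm hN (by omega) (by omega)
  rw [show α - u - 1 - 1 = α - u - 2 by omega] at hT
  -- nonzero-ness of elements with the target order
  have hne : ∀ x : ZMod N, p ^ (α - u - 1) ∣ addOrderOf x → x ≠ 0 := by
    intro x hdvd hx
    rw [hx, addOrderOf_zero] at hdvd
    have h1 : p ∣ 1 := (dvd_pow_self p (show α - u - 1 ≠ 0 by omega)).trans hdvd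
    rw [Nat.dvd_one] at h1
    omega
  -- bijection between pairs and elements
  have hbij : (((Finset.Icc (1:ℤ) (k:ℤ)) ×ˢ S).filter
      (fun cs => p ^ (α - u - 1) ∣ addOrderOf (cs.1 • cs.2) ∧
        ¬ p ^ (α - u - 1 + 1) ∣ addOrderOf (cs.1 • cs.2))).card
    = ((Finset.univ : Finset (ZMod N)).filter
        (fun x => p ^ (α - u - 1) ∣ addOrderOf x ∧
          ¬ p ^ (α - u - 1 + 1) ∣ addOrderOf x)).card := by
    refine Finset.card_bij (fun cs _ => cs.1 • cs.2) ?_ ?_ ?_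
    · intro cs hcs
      simp only [Finset.mem_filter] at hcs
      simp only [Finset.mem_filter, Finset.mem_univ, true_and]
      exact hcs.2
    · intro cs1 h1 cs2 h2 heq
      simp only [Finset.mem_filter, Finset.mem_product, Finset.mem_Icc] at h1 h2
      have hg : cs1.1 • cs1.2 ≠ 0 := hne _ h1.2.1
      obtain ⟨ms, -, huniq⟩ := h (cs1.1 • cs1.2) hg
      have e1 := huniq cs1 ⟨Set.mem_Icc.2 h1.1.1, Finset.mem_coe.2 h1.1.2, rfl⟩
      have e2 := huniq cs2 ⟨Set.mem_Icc.2 h2.1.1, Finset.mem_coe.2 h2.1.2, heq.symm⟩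
      exact e1.trans e2.symm
    · intro g hg
      simp only [Finset.mem_filter, Finset.mem_univ, true_and] at hg
      obtain ⟨ms, ⟨hms1, hms2, hms3⟩, -⟩ := h g (hne g hg.1)
      refine ⟨ms, ?_, hms3⟩
      simp only [Finset.mem_filter, Finset.mem_product, Finset.mem_Icc]
      rw [hms3]
      exact ⟨⟨Set.mem_Icc.1 hms1, Finset.mem_coe.1 hms2⟩, hg⟩
  -- from pairs to a sum over S
  have hsum : (((Finset.Icc (1:ℤ) (k:ℤ)) ×ˢ S).filter
      (fun cs => p ^ (α - u - 1) ∣ addOrderOf (cs.1 • cs.2) ∧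
        ¬ p ^ (α - u - 1 + 1) ∣ addOrderOf (cs.1 • cs.2))).card
    = ∑ s ∈ S, ((Finset.Icc (1:ℤ) (k:ℤ)).filter
        (fun c => p ^ (α - u - 1) ∣ addOrderOf (c • s) ∧
          ¬ p ^ (α - u - 1 + 1) ∣ addOrderOf (c • s))).card := by
    rw [Finset.card_filter, Finset.sum_product, Finset.sum_comm]
    exact Finset.sum_congr rfl fun s _ => (Finset.card_filter _ _).symm
  -- evaluate the inner count for each s
  have key : ∀ s ∈ S,
      ((Finset.Icc (1:ℤ) (k:ℤ)).filter
        (fun c => p ^ (α - u - 1) ∣ addOrderOf (c • s) ∧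
          ¬ p ^ (α - u - 1 + 1) ∣ addOrderOf (c • s))).card
      = (if (addOrderOf s).factorization p = α - u - 1 then k - k / p else 0)
        + (if (addOrderOf s).factorization p = α then k / p ^ (u + 1) - k / p ^ (u + 2)
            else 0) := by
    intro s hs
    have he := hordne s
    have hcond : ∀ c ∈ Finset.Icc (1:ℤ) (k:ℤ),
        ((p ^ (α - u - 1) ∣ addOrderOf (c • s) ∧
            ¬ p ^ (α - u - 1 + 1) ∣ addOrderOf (c • s)) ↔
          (addOrderOf s).factorization p -
            min ((addOrderOf s).factorization p) (c.toNat.factorization p) = α - u - 1) := by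
      intro c hc
      rw [Finset.mem_Icc] at hc
      obtain ⟨n, hn0, rfl⟩ : ∃ n : ℕ, n ≠ 0 ∧ c = (n : ℤ) := ⟨c.toNat, by omega, by omega⟩
      have hgdvd : (addOrderOf s).gcd n ∣ addOrderOf s := Nat.gcd_dvd_left _ _
      have hgne : (addOrderOf s).gcd n ≠ 0 :=
        fun hh => he (Nat.eq_zero_of_gcd_eq_zero_left hh)
      have hqne : addOrderOf s / (addOrderOf s).gcd n ≠ 0 := by
        have := Nat.div_pos (Nat.le_of_dvd (Nat.pos_of_ne_zero he) hgdvd)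
          (Nat.pos_of_ne_zero hgne)
        omega
      rw [natCast_zsmul, addOrderOf_nsmul' s hn0, Int.toNat_natCast,
        exact_pow_iff_factorization hp hqne, Nat.factorization_div hgdvd, Finsupp.tsub_apply,
        Nat.factorization_gcd he hn0, Finsupp.inf_apply]
    rw [Finset.filter_congr hcond]
    set j := (addOrderOf s).factorization p with hj
    have hcase : j < α - u - 1 ∨ j = α - u - 1 ∨ j = α := by
      have h1 := hjle s
      have h2 := hband s hs
      omega
    rcases hcase with hj' | hj' | hj'
    · rw [Finset.filter_false_of_mem (fun c _ => by omega), Finset.card_empty,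
        if_neg (by omega), if_neg (by omega)]
    · have e : ∀ c ∈ Finset.Icc (1:ℤ) (k:ℤ),
          (j - min j (c.toNat.factorization p) = α - u - 1) ↔ ¬ p ∣ c.toNat := by
        intro c hc
        rw [Finset.mem_Icc] at hc
        have hcn : c.toNat ≠ 0 := by omega
        rw [hp.dvd_iff_one_le_factorization hcn]
        omega
      rw [Finset.filter_congr e, card_Icc_int_toNat k (fun n => ¬ p ∣ n)]
      have h1 := Finset.card_filter_add_card_filter_not
        (s := Finset.Ioc 0 k) (p := (p ∣ ·))
      rw [Nat.card_Ioc, Nat.Ioc_filter_dvd_card_eq_div] at h1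
      have h2 : ((Finset.Ioc 0 k).filter (fun n => ¬ p ∣ n)).card
          = ((Finset.Ioc 0 k).filter (fun a => ¬ (p ∣ ·) a)).card := rfl
      rw [if_pos hj', if_neg (by omega), h2]
      omega
    · have e : ∀ c ∈ Finset.Icc (1:ℤ) (k:ℤ),
          (j - min j (c.toNat.factorization p) = α - u - 1) ↔
            (p ^ (u + 1) ∣ c.toNat ∧ ¬ p ^ (u + 2) ∣ c.toNat) := by
        intro c hc
        rw [Finset.mem_Icc] at hc
        have hcn : c.toNat ≠ 0 := by omega
        rw [show u + 2 = (u + 1) + 1 by omega, exact_pow_iff_factorization hp hcn]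
        omega
      rw [Finset.filter_congr e,
        card_Icc_int_toNat k (fun n => p ^ (u + 1) ∣ n ∧ ¬ p ^ (u + 2) ∣ n),
        card_Ioc_dvd_not_dvd (pow_dvd_pow p (show u + 1 ≤ u + 2 by omega)),
        if_neg (by omega), if_pos hj']
      omega
  -- assemble the sum
  have hsum2 : ∑ s ∈ S, ((Finset.Icc (1:ℤ) (k:ℤ)).filter
        (fun c => p ^ (α - u - 1) ∣ addOrderOf (c • s) ∧
          ¬ p ^ (α - u - 1 + 1) ∣ addOrderOf (c • s))).card
      = (k - k / p) * (S.filter (fun s => (addOrderOf s).factorization p = α - u - 1)).card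
        + (k / p ^ (u + 1) - k / p ^ (u + 2)) *
            (S.filter (fun s => (addOrderOf s).factorization p = α)).card := by
    rw [Finset.sum_congr rfl key, Finset.sum_add_distrib]
    congr 1
    · rw [← Finset.sum_filter, Finset.sum_const, smul_eq_mul, mul_comm]
    · rw [← Finset.sum_filter, Finset.sum_const, smul_eq_mul, mul_comm]
  have hfilt1 : S.filter
        (fun s => p ^ (α - u - 1) ∣ addOrderOf s ∧ ¬ p ^ (α - u - 1 + 1) ∣ addOrderOf s)
      = S.filter (fun s => (addOrderOf s).factorization p = α - u - 1) :=
    Finset.filter_congr fun s _ => exact_pow_iff_factorization hp (hordne s)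
  have hfilt2 : S.filter (fun s => p ^ α ∣ addOrderOf s ∧ ¬ p ^ (α + 1) ∣ addOrderOf s)
      = S.filter (fun s => (addOrderOf s).factorization p = α) :=
    Finset.filter_congr fun s _ => exact_pow_iff_factorization hp (hordne s)
  rw [hfilt1, hfilt2, ← hsum2, ← hsum, hbij, hT]
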